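/- Fix integers m ≥ 2, d ≥ 0, integers r_1, …, r_d with 1 ≤ r_i ≤ m−1, an integer q ≥ d, an integer ρ with 0 ≤ ρ < m, and N ≥ 0. Then the coefficient of x^N in the power series p_{m−ρ−1}(x)·(∏_{i=1}^d p_{r_i}(x))·p_m(x)^{−(q+1)} ∈ ℚ[[x]] equals the number of (q+1)-tuples (P_0, P_1, …, P_q) of Dyck paths for which there exist nonnegative integers u_0, …, u_q with u_0+⋯+u_q = N, P_0 is counted by D_m(0, m−ρ−1; u_0), for 1 ≤ i ≤ d the path P_i is counted by D_m(r_i, 0; u_i), and for d+1 ≤ ν ≤ q the path P_ν is counted by D_m(0, 0; u_ν). -/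

import Mathlib

/-- The Chebyshev-type polynomial sequence: `p 0 = p 1 = 1`,
`p (r+2) = p (r+1) - X * p r`. -/
noncomputable def chebP : ℕ → Polynomial ℚ
  | 0 => 1
  | 1 => 1
  | (r+2) => chebP (r+1) - Polynomial.X * chebP r

/-- The height of a lattice path after its first `i` steps, where the path is
encoded as `st : Fin n → Bool` (`true` = up-step `U = (1,1)`,
`false` = down-step `D = (1,-1)`), starting at `(0,0)`. -/
def heightAt {n : ℕ} (st : Fin n → Bool) (i : ℕ) : ℤ :=
  ∑ j ∈ Finset.univ.filter (fun j : Fin n => (j : ℕ) < i),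
    (if st j then (1 : ℤ) else -1)

/-- `dyckCount m a b u` is the number of Dyck paths (lattice paths from `(0,0)`
ending on the x-axis with steps `U = (1,1)`, `D = (1,-1)` that never go below
the x-axis) of height at most `m-1` and semilength `m-1-b+u` whose first `a`
steps are up-steps and whose last `m-1-b` steps are down-steps. -/
noncomputable def dyckCount (m a b u : ℕ) : ℕ :=
  Nat.card {st : Fin (2 * (m - 1 - b + u)) → Bool //
    heightAt st (2 * (m - 1 - b + u)) = 0 ∧
    (∀ i ≤ 2 * (m - 1 - b + u), 0 ≤ heightAt st i ∧ heightAt st i ≤ (m : ℤ) - 1) ∧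
    (∀ j : Fin (2 * (m - 1 - b + u)), (j : ℕ) < a → st j = true) ∧
    (∀ j : Fin (2 * (m - 1 - b + u)),
        2 * (m - 1 - b + u) - (m - 1 - b) ≤ (j : ℕ) → st j = false)}



namespace S8

/-- Number of walks on `{0,…,m-1}` of length `l` from `h` to `s` with ±1 steps. -/
def W (m s : ℕ) : ℕ → ℕ → ℕ
  | h, 0 => if h = s then 1 else 0
  | h, l + 1 =>
      (if h + 1 ≤ m - 1 then W m s (h + 1) l else 0) +
      (if 1 ≤ h then W m s (h - 1) l else 0)

lemma W_zero (m s h : ℕ) : W m s h 0 = if h = s then 1 else 0 := rfl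

lemma W_succ (m s h l : ℕ) :
    W m s h (l + 1) =
      (if h + 1 ≤ m - 1 then W m s (h + 1) l else 0) +
      (if 1 ≤ h then W m s (h - 1) l else 0) := rfl

lemma W_eq_zero (m s : ℕ) : ∀ l h, h + l < s → W m s h l = 0 := by
  intro l
  induction l with
  | zero => intro h hh; rw [W_zero]; simp; omega
  | succ l ih =>
      intro h hh
      rw [W_succ]
      have h1 : h + 1 + l < s := by omega
      have h2 : h - 1 + l < s := by omega
      rw [ih _ h1, ih _ h2]; simp

lemma W_last (m s : ℕ) (hs : s ≤ m - 1) :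
    ∀ l h, h ≤ m - 1 → W m s h (l + 1) =
      (if s + 1 ≤ m - 1 then W m (s + 1) h l else 0) +
      (if 1 ≤ s then W m (s - 1) h l else 0) := by
  intro l
  induction l with
  | zero =>
      intro h hh
      rw [W_succ]
      simp only [W_zero]
      split_ifs <;> omega
  | succ l ih =>
      intro h hh
      rw [W_succ]
      by_cases h1 : h + 1 ≤ m - 1 <;> by_cases h2 : 1 ≤ h <;>
        simp only [h1, h2, if_true, if_false, ite_true, ite_false]
      · rw [ih (h+1) h1, ih (h-1) (by omega)]
        rw [W_succ (m) (s+1) h (l), W_succ (m) (s-1) h (l)] <;> try skip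
        simp only [h1, h2, if_true, if_false, ite_true, ite_false]
        split_ifs <;> ring
      · rw [ih (h+1) h1]
        rw [W_succ (m) (s+1) h (l), W_succ (m) (s-1) h (l)]
        have h2' : ¬ (1 ≤ h) := h2
        simp only [h1, h2', if_true, if_false, ite_true, ite_false]
        split_ifs <;> ring
      · rw [ih (h-1) (by omega)]
        rw [W_succ (m) (s+1) h (l), W_succ (m) (s-1) h (l)]
        simp only [h1, h2, if_true, if_false, ite_true, ite_false]
        split_ifs <;> ring
      · rw [W_succ (m) (s+1) h (l), W_succ (m) (s-1) h (l)]
        simp only [h1, h2, if_true, if_false, ite_true, ite_false]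
        split_ifs <;> ring

lemma W_symm (m s : ℕ) (hs : s ≤ m - 1) :
    ∀ l h, h ≤ m - 1 → W m s h l = W m h s l := by
  intro l
  induction l with
  | zero => intro h hh; rw [W_zero, W_zero]; simp [eq_comm]
  | succ l ih =>
      intro h hh
      rw [W_succ, W_last m h hh l s hs]
      by_cases h1 : h + 1 ≤ m - 1 <;> by_cases h2 : 1 ≤ h <;>
        simp only [h1, h2, if_true, if_false, ite_true, ite_false]
      · rw [ih (h+1) h1, ih (h-1) (by omega)]
      · rw [ih (h+1) h1]
      · rw [ih (h-1) (by omega)]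


lemma heightAt_zero {n : ℕ} (st : Fin n → Bool) : heightAt st 0 = 0 := by
  simp [heightAt]

lemma heightAt_cons {k : ℕ} (c : Bool) (t : Fin k → Bool) (i : ℕ) :
    heightAt (Fin.cons c t) (i + 1) = (if c then (1:ℤ) else -1) + heightAt t i := by
  unfold heightAt
  rw [Finset.sum_filter, Finset.sum_filter, Fin.sum_univ_succ]
  simp [Fin.cons_zero, Fin.cons_succ, Nat.succ_lt_succ_iff]

lemma card_split {k : ℕ} (P : (Fin (k+1) → Bool) → Prop) :
    Nat.card {st : Fin (k+1) → Bool // P st} =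
      Nat.card {t : Fin k → Bool // P (Fin.cons true t)} +
      Nat.card {t : Fin k → Bool // P (Fin.cons false t)} := by
  rw [← Nat.card_sum]
  apply Nat.card_congr
  refine
    { toFun := fun st =>
        if h : st.1 0 = true then
          Sum.inl ⟨Fin.tail st.1, by
            have : Fin.cons true (Fin.tail st.1) = st.1 := by
              rw [← h]; exact Fin.cons_self_tail st.1
            rw [this]; exact st.2⟩
        else
          Sum.inr ⟨Fin.tail st.1, by
            have hf : st.1 0 = false := by simpa using h
            have : Fin.cons false (Fin.tail st.1) = st.1 := by
              rw [← hf]; exact Fin.cons_self_tail st.1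
            rw [this]; exact st.2⟩,
      invFun := Sum.elim (fun t => ⟨Fin.cons true t.1, t.2⟩)
        (fun t => ⟨Fin.cons false t.1, t.2⟩),
      left_inv := ?_, right_inv := ?_ }
  · intro st
    by_cases h : st.1 0 = true
    · dsimp only
      rw [dif_pos h]
      exact Subtype.ext (by rw [Sum.elim_inl]; conv_rhs => rw [← Fin.cons_self_tail st.1, h])
    · dsimp only
      rw [dif_neg h]
      have hf : st.1 0 = false := by simpa using h
      exact Subtype.ext (by rw [Sum.elim_inr]; conv_rhs => rw [← Fin.cons_self_tail st.1, hf])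
  · rintro (t | t)
    · simp
    · have : (Fin.cons false t.1 : Fin (k+1) → Bool) 0 = false := rfl
      simp [this]

/-- The path property with a variable starting height `h`. -/
def PathP (m : ℕ) (h : ℤ) (k a s : ℕ) (st : Fin k → Bool) : Prop :=
  h + heightAt st k = 0 ∧
  (∀ i ≤ k, 0 ≤ h + heightAt st i ∧ h + heightAt st i ≤ (m : ℤ) - 1) ∧
  (∀ j : Fin k, (j : ℕ) < a → st j = true) ∧
  (∀ j : Fin k, k - s ≤ (j : ℕ) → st j = false)


lemma pathP_cons_true (m h k a s : ℕ) (hm : 1 ≤ m) (hs : s ≤ k) (hh : h + 1 ≤ m - 1)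
    (t : Fin k → Bool) :
    PathP m (h : ℤ) (k+1) a s (Fin.cons true t) ↔ PathP m ((h : ℤ) + 1) k (a-1) s t := by
  have hb : (h : ℤ) + 1 ≤ (m : ℤ) - 1 := by omega
  constructor
  · rintro ⟨e, bd, pre, suf⟩
    refine ⟨?_, ?_, ?_, ?_⟩
    · have := e; rw [heightAt_cons] at this; simp only [if_true] at this; linarith
    · intro i hi
      have := bd (i+1) (by omega)
      rw [heightAt_cons] at this; simp only [if_true] at this
      constructor <;> linarith [this.1, this.2]
    · intro j hj
      have := pre j.succ (by simp [Fin.val_succ]; omega)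
      rwa [Fin.cons_succ] at this
    · intro j hj
      have := suf j.succ (by simp [Fin.val_succ]; omega)
      rwa [Fin.cons_succ] at this
  · rintro ⟨e, bd, pre, suf⟩
    refine ⟨?_, ?_, ?_, ?_⟩
    · rw [heightAt_cons]; simp only [if_true]; linarith
    · intro i hi
      cases i with
      | zero =>
          rw [heightAt_zero]
          refine ⟨by positivity, by linarith⟩
      | succ i =>
          have := bd i (by omega)
          rw [heightAt_cons]; simp only [if_true]
          constructor <;> linarith [this.1, this.2]
    · refine fun j => Fin.cases (fun _ => by simp) (fun j' hj => ?_) j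
      rw [Fin.cons_succ]
      refine pre j' ?_
      have : (j' : ℕ) + 1 < a := by simpa [Fin.val_succ] using hj
      omega
    · refine fun j => Fin.cases (fun hj => absurd hj (by simp; omega)) (fun j' hj => ?_) j
      rw [Fin.cons_succ]
      refine suf j' ?_
      have : k + 1 - s ≤ (j' : ℕ) + 1 := by simpa [Fin.val_succ] using hj
      omega

lemma pathP_cons_false (m h k s : ℕ) (hm : 1 ≤ m) (hh1 : 1 ≤ h) (hh : h ≤ m - 1)
    (t : Fin k → Bool) :
    PathP m (h : ℤ) (k+1) 0 s (Fin.cons false t) ↔ PathP m ((h : ℤ) - 1) k 0 (min s k) t := by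
  have hb : (h : ℤ) ≤ (m : ℤ) - 1 := by omega
  have hb1 : (1 : ℤ) ≤ (h : ℤ) := by omega
  constructor
  · rintro ⟨e, bd, pre, suf⟩
    refine ⟨?_, ?_, ?_, ?_⟩
    · have := e; rw [heightAt_cons] at this; norm_num at this; linarith
    · intro i hi
      have := bd (i+1) (by omega)
      rw [heightAt_cons] at this; norm_num at this
      constructor <;> linarith [this.1, this.2]
    · intro j hj; omega
    · intro j hj
      have := suf j.succ (by simp [Fin.val_succ]; omega)
      rwa [Fin.cons_succ] at this
  · rintro ⟨e, bd, pre, suf⟩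
    refine ⟨?_, ?_, ?_, ?_⟩
    · rw [heightAt_cons]; norm_num; linarith
    · intro i hi
      cases i with
      | zero =>
          rw [heightAt_zero]
          refine ⟨by positivity, by linarith⟩
      | succ i =>
          have := bd i (by omega)
          rw [heightAt_cons]; norm_num
          constructor <;> linarith [this.1, this.2]
    · intro j hj; omega
    · refine fun j => Fin.cases (fun _ => by simp) (fun j' hj => ?_) j
      rw [Fin.cons_succ]
      refine suf j' ?_
      have : k + 1 - s ≤ (j' : ℕ) + 1 := by simpa [Fin.val_succ] using hj
      omega


lemma master (m : ℕ) (hm : 1 ≤ m) :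
    ∀ k a s h : ℕ, h + a ≤ m - 1 → a + s ≤ k →
      Nat.card {st : Fin k → Bool // PathP m (h : ℤ) k a s st} = W m s (h + a) (k - a - s) := by
  intro k
  induction k with
  | zero =>
      intro a s h h1 h2
      have ha : a = 0 := by omega
      have hs : s = 0 := by omega
      subst ha; subst hs
      rw [W_zero]
      by_cases hh : h = 0
      · subst hh
        have huniq : ∀ st : Fin 0 → Bool, PathP m ((0:ℕ) : ℤ) 0 0 0 st := by
          intro st
          refine ⟨by rw [heightAt_zero]; simp, ?_, fun j _ => j.elim0, fun j _ => j.elim0⟩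
          intro i hi
          have : i = 0 := by omega
          subst this
          rw [heightAt_zero]
          constructor
          · simp
          · simp; omega
        haveI : Unique {st : Fin 0 → Bool // PathP m ((0:ℕ):ℤ) 0 0 0 st} :=
          { default := ⟨fun j => j.elim0, huniq _⟩,
            uniq := fun x => Subtype.ext (funext fun j => j.elim0) }
        rw [Nat.card_unique]
        simp
      · haveI : IsEmpty {st : Fin 0 → Bool // PathP m (h : ℤ) 0 0 0 st} := by
          rw [isEmpty_subtype]
          rintro st ⟨e, -, -, -⟩
          rw [heightAt_zero] at e
          omega
        rw [Nat.card_of_isEmpty]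
        simp [hh]
  | succ k ihk =>
      intro a s h h1 h2
      rcases Nat.eq_zero_or_pos a with ha | ha
      · -- a = 0
        subst ha
        by_cases hsk : s ≤ k
        · -- free first step
          rw [card_split]
          have t1 : Nat.card {t : Fin k → Bool // PathP m (h:ℤ) (k+1) 0 s (Fin.cons true t)} =
              if h + 1 ≤ m - 1 then W m s (h+1) (k - s) else 0 := by
            by_cases hh : h + 1 ≤ m - 1
            · rw [if_pos hh]
              rw [Nat.card_congr (Equiv.subtypeEquivRight
                (pathP_cons_true m h k 0 s hm hsk hh))]
              rw [show ((h:ℤ) + 1) = (((h+1 : ℕ)):ℤ) from by push_cast; ring]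
              rw [ihk 0 s (h+1) (by omega) (by omega)]
              congr 1 <;> omega
            · rw [if_neg hh]
              haveI : IsEmpty {t : Fin k → Bool // PathP m (h:ℤ) (k+1) 0 s (Fin.cons true t)} := by
                rw [isEmpty_subtype]
                rintro t ⟨-, bd, -, -⟩
                have hbd := (bd 1 (by omega)).2
                have hc := heightAt_cons true t 0
                norm_num at hc
                rw [hc, heightAt_zero] at hbd
                omega
              exact Nat.card_of_isEmpty
          have t0 : Nat.card {t : Fin k → Bool // PathP m (h:ℤ) (k+1) 0 s (Fin.cons false t)} =
              if 1 ≤ h then W m s (h-1) (k - s) else 0 := by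
            by_cases hh : 1 ≤ h
            · rw [if_pos hh]
              rw [Nat.card_congr (Equiv.subtypeEquivRight
                (pathP_cons_false m h k s hm hh (by omega)))]
              rw [show ((h:ℤ) - 1) = (((h-1 : ℕ)):ℤ) from by omega]
              rw [show min s k = s from by omega]
              rw [ihk 0 s (h-1) (by omega) (by omega)]
              congr 1 <;> omega
            · rw [if_neg hh]
              haveI : IsEmpty {t : Fin k → Bool // PathP m (h:ℤ) (k+1) 0 s (Fin.cons false t)} := by
                rw [isEmpty_subtype]
                rintro t ⟨-, bd, -, -⟩
                have hbd := (bd 1 (by omega)).1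
                have hc := heightAt_cons false t 0
                norm_num at hc
                rw [hc, heightAt_zero] at hbd
                omega
              exact Nat.card_of_isEmpty
          rw [t1, t0]
          rw [show (k + 1 - 0 - s) = (k - s) + 1 from by omega, W_succ]
          simp only [Nat.add_zero]
        · -- s = k + 1 : all steps down
          have hs : s = k + 1 := by omega
          subst hs
          rw [card_split]
          have t1 : Nat.card {t : Fin k → Bool // PathP m (h:ℤ) (k+1) 0 (k+1) (Fin.cons true t)} = 0 := by
            haveI : IsEmpty {t : Fin k → Bool // PathP m (h:ℤ) (k+1) 0 (k+1) (Fin.cons true t)} := by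
              rw [isEmpty_subtype]
              rintro t ⟨-, -, -, suf⟩
              have := suf 0 (by simp)
              simp at this
            exact Nat.card_of_isEmpty
          have t0 : Nat.card {t : Fin k → Bool // PathP m (h:ℤ) (k+1) 0 (k+1) (Fin.cons false t)} =
              if h - 1 = k ∧ 1 ≤ h then 1 else 0 := by
            by_cases hh : 1 ≤ h
            · rw [Nat.card_congr (Equiv.subtypeEquivRight
                (pathP_cons_false m h k (k+1) hm hh (by omega)))]
              rw [show ((h:ℤ) - 1) = (((h-1 : ℕ)):ℤ) from by omega]
              rw [show min (k+1) k = k from by omega]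
              rw [ihk 0 k (h-1) (by omega) (by omega)]
              rw [show (k - 0 - k) = 0 from by omega, W_zero]
              simp only [Nat.add_zero]
              split_ifs <;> first | rfl | omega
            · haveI : IsEmpty {t : Fin k → Bool // PathP m (h:ℤ) (k+1) 0 (k+1) (Fin.cons false t)} := by
                rw [isEmpty_subtype]
                rintro t ⟨-, bd, -, -⟩
                have hbd := (bd 1 (by omega)).1
                have hc := heightAt_cons false t 0
                norm_num at hc
                rw [hc, heightAt_zero] at hbd
                omega
              rw [Nat.card_of_isEmpty]
              split_ifs <;> first | rfl | omega
          rw [t1, t0]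
          rw [show (k + 1 - 0 - (k+1)) = 0 from by omega, W_zero]
          split_ifs <;> omega
      · -- a ≥ 1
        rw [card_split]
        have t0 : Nat.card {t : Fin k → Bool // PathP m (h:ℤ) (k+1) a s (Fin.cons false t)} = 0 := by
          haveI : IsEmpty {t : Fin k → Bool // PathP m (h:ℤ) (k+1) a s (Fin.cons false t)} := by
            rw [isEmpty_subtype]
            rintro t ⟨-, -, pre, -⟩
            have := pre 0 (by simp; omega)
            simp at this
          exact Nat.card_of_isEmpty
        have t1 : Nat.card {t : Fin k → Bool // PathP m (h:ℤ) (k+1) a s (Fin.cons true t)} =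
            W m s (h + a) (k + 1 - a - s) := by
          rw [Nat.card_congr (Equiv.subtypeEquivRight
            (pathP_cons_true m h k a s hm (by omega) (by omega)))]
          rw [show ((h:ℤ) + 1) = (((h+1 : ℕ)):ℤ) from by push_cast; ring]
          rw [ihk (a-1) s (h+1) (by omega) (by omega)]
          congr 1 <;> omega
        rw [t1, t0]
        omega


lemma chebP_zero : chebP 0 = 1 := rfl
lemma chebP_one : chebP 1 = 1 := rfl
lemma chebP_rec (n : ℕ) : chebP (n+2) = chebP (n+1) - Polynomial.X * chebP n := rfl

lemma cheb_cross (i : ℕ) : ∀ M : ℕ,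
    chebP (i+1) * chebP (M+1) = chebP (i+M+2) + Polynomial.X * (chebP i * chebP M) := by
  induction i with
  | zero =>
      intro M
      rw [chebP_one, chebP_zero, one_mul, one_mul]
      rw [show 0+M+2 = M+2 from by ring, chebP_rec M]
      ring
  | succ i ih =>
      intro M
      have e2 := ih (M+1)
      rw [show i+(M+1)+2 = i+M+3 from by ring] at e2
      rw [show i+1+M+2 = i+M+3 from by ring]
      have h3 : chebP (i+M+3) =
          chebP (i+1) * chebP (M+2) - Polynomial.X * (chebP i * chebP (M+1)) := by
        rw [e2]; ring
      rw [h3, show i+1+1 = i+2 from rfl, chebP_rec i, chebP_rec M]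
      ring

lemma chebP_coeff_zero (n : ℕ) : (chebP n).coeff 0 = 1 := by
  induction n using Nat.twoStepInduction with
  | zero => simp [chebP_zero]
  | one => simp [chebP_one]
  | more n ih1 ih2 =>
      have hx : (Polynomial.X * chebP n).coeff 0 = (0:ℚ) := by
        rw [Polynomial.mul_coeff_zero]; simp
      rw [chebP_rec, Polynomial.coeff_sub, hx, ih2]; ring


noncomputable def Fser (m i j : ℕ) : PowerSeries ℚ :=
  PowerSeries.mk fun u => ((W m j i ((j - i) + 2*u) : ℕ) : ℚ)

lemma S_off0 (m j : ℕ) (hm : 2 ≤ m) (hj : 1 ≤ j) : Fser m 0 j = Fser m 1 j := by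
  ext u
  rw [Fser, Fser, PowerSeries.coeff_mk, PowerSeries.coeff_mk]
  norm_cast
  rw [show j - 0 + 2*u = (j - 1 + 2*u) + 1 from by omega, W_succ]
  have h1 : 0 + 1 ≤ m - 1 := by omega
  simp [h1]

lemma S_off (m i j : ℕ) (h1 : 1 ≤ i) (hij : i < j) (hjm : j ≤ m - 1) :
    Fser m i j = Fser m (i+1) j + PowerSeries.X * Fser m (i-1) j := by
  have him : i + 1 ≤ m - 1 := by omega
  ext u
  rw [map_add]
  cases u with
  | zero =>
      have hX : (PowerSeries.coeff (R := ℚ) 0) (PowerSeries.X * Fser m (i-1) j) = 0 := by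
        rw [PowerSeries.coeff_zero_eq_constantCoeff, map_mul, PowerSeries.constantCoeff_X,
          zero_mul]
      rw [hX, add_zero, Fser, Fser, PowerSeries.coeff_mk, PowerSeries.coeff_mk]
      norm_cast
      rw [show j - i + 2*0 = (j - (i+1) + 2*0) + 1 from by omega, W_succ, if_pos him,
        if_pos h1]
      rw [W_eq_zero m j (j - (i+1)) (i-1) (by omega), add_zero]
      norm_num
  | succ u =>
      rw [PowerSeries.coeff_succ_X_mul, Fser, Fser, Fser, PowerSeries.coeff_mk,
        PowerSeries.coeff_mk, PowerSeries.coeff_mk]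
      norm_cast
      rw [show j - i + 2*(u+1) = (j - (i+1) + 2*(u+1)) + 1 from by omega, W_succ, if_pos him,
        if_pos h1]
      congr 2
      omega

lemma W_diag_succ (m i u : ℕ) (hm : 2 ≤ m) (him : i ≤ m - 1) :
    W m i i (2*(u+1)) =
      (if i+1 ≤ m - 1 then W m (i+1) i ((i+1-i) + 2*u) else 0) +
      (if 1 ≤ i then W m i (i-1) ((i-(i-1)) + 2*u) else 0) := by
  rw [show 2*(u+1) = (2*u+1)+1 from by omega, W_last m i him (2*u+1) i him]
  congr 1
  · by_cases hc : i + 1 ≤ m - 1 <;> simp only [hc, if_true, if_false, ite_true, ite_false]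
    congr 1
    omega
  · by_cases hc : 1 ≤ i <;> simp only [hc, if_true, if_false, ite_true, ite_false]
    rw [W_symm m (i-1) (by omega) (2*u+1) i him]
    congr 1
    omega

lemma S_diag (m i : ℕ) (hm : 2 ≤ m) (him : i ≤ m - 1) :
    Fser m i i = 1 + PowerSeries.X *
      ((if i+1 ≤ m - 1 then Fser m i (i+1) else 0) +
       (if 1 ≤ i then Fser m (i-1) i else 0)) := by
  ext u
  rw [map_add]
  cases u with
  | zero =>
      have hX : (PowerSeries.coeff (R := ℚ) 0) (PowerSeries.X *
          ((if i+1 ≤ m - 1 then Fser m i (i+1) else 0) +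
           (if 1 ≤ i then Fser m (i-1) i else 0))) = 0 := by
        rw [PowerSeries.coeff_zero_eq_constantCoeff, map_mul, PowerSeries.constantCoeff_X,
          zero_mul]
      rw [hX, add_zero, Fser, PowerSeries.coeff_mk]
      rw [show i - i + 2*0 = 0 from by omega, W_zero, if_pos rfl]
      simp
  | succ u =>
      rw [PowerSeries.coeff_succ_X_mul]
      have h1 : (PowerSeries.coeff (R := ℚ) (u+1)) (1 : PowerSeries ℚ) = 0 := by
        rw [PowerSeries.coeff_one]
        simp
      rw [h1, zero_add, map_add, apply_ite (PowerSeries.coeff (R := ℚ) u),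
        apply_ite (PowerSeries.coeff (R := ℚ) u), map_zero, Fser, Fser, Fser,
        PowerSeries.coeff_mk]
      simp only [PowerSeries.coeff_mk]
      rw [show i - i + 2*(u+1) = 2*(u+1) from by omega, W_diag_succ m i u hm him]
      push_cast [apply_ite (fun n : ℕ => (n : ℚ))]
      ring

lemma coeff_X_mul_congr {A B : PowerSeries ℚ} (N : ℕ)
    (h : ∀ N' < N, (PowerSeries.coeff (R := ℚ) N') A = (PowerSeries.coeff (R := ℚ) N') B) :
    (PowerSeries.coeff (R := ℚ) N) (PowerSeries.X * A) = (PowerSeries.coeff (R := ℚ) N) (PowerSeries.X * B) := by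
  cases N with
  | zero =>
      rw [PowerSeries.coeff_zero_eq_constantCoeff_apply,
        PowerSeries.coeff_zero_eq_constantCoeff_apply, map_mul, map_mul,
        PowerSeries.constantCoeff_X, zero_mul, zero_mul]
  | succ N' =>
      rw [PowerSeries.coeff_succ_X_mul, PowerSeries.coeff_succ_X_mul]
      exact h N' (by omega)


lemma key (m : ℕ) (hm : 2 ≤ m) :
    ∀ N : ℕ, ∀ i j : ℕ, i ≤ j → j ≤ m - 1 →
      (PowerSeries.coeff (R := ℚ) N) (Fser m i j * (chebP m : PowerSeries ℚ)) =
      (PowerSeries.coeff (R := ℚ) N) ((chebP i * chebP (m-1-j) : Polynomial ℚ) : PowerSeries ℚ) := by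
  intro N
  induction N using Nat.strong_induction_on with
  | _ N IH =>
  have inner : ∀ c : ℕ, ∀ i j : ℕ, i ≤ j → j ≤ m - 1 → j = i + c →
      (PowerSeries.coeff (R := ℚ) N) (Fser m i j * (chebP m : PowerSeries ℚ)) =
      (PowerSeries.coeff (R := ℚ) N) ((chebP i * chebP (m-1-j) : Polynomial ℚ) : PowerSeries ℚ) := by
    intro c
    induction c with
    | zero =>
        intro i j hij hjm hc
        have hji : j = i := by omega
        subst hji
        rw [S_diag m j hm hjm, add_mul, one_mul, mul_assoc, map_add]
        rcases Nat.eq_zero_or_pos j with hj0 | hj1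
        · -- j = 0
          subst hj0
          have g1 : 0 + 1 ≤ m - 1 := by omega
          have g2 : ¬ (1 ≤ (0:ℕ)) := by omega
          rw [if_pos g1, if_neg g2, add_zero]
          obtain ⟨m'', rfl⟩ : ∃ m'', m = m'' + 2 := ⟨m - 2, by omega⟩
          have hpoly : chebP 0 * chebP (m''+2-1-0) =
              chebP (m''+2) + Polynomial.X * (chebP 0 * chebP (m''+2-1-(0+1))) := by
            rw [chebP_zero, one_mul, one_mul, show m''+2-1-0 = m''+1 from by omega,
              show m''+2-1-(0+1) = m'' from by omega, chebP_rec m'']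
            ring
          rw [hpoly, Polynomial.coe_add, Polynomial.coe_mul, Polynomial.coe_X, map_add]
          congr 1
          refine coeff_X_mul_congr N (fun N' hN' => ?_)
          exact IH N' hN' 0 (0+1) (by omega) (by omega)
        · by_cases hj2 : j + 1 ≤ m - 1
          · -- middle case
            rw [if_pos hj2, if_pos (show 1 ≤ j from hj1), add_mul]
            have hpoly : chebP j * chebP (m-1-j) =
                chebP m + Polynomial.X *
                  (chebP j * chebP (m-1-(j+1)) + chebP (j-1) * chebP (m-1-j)) := by
              obtain ⟨a, rfl⟩ : ∃ a, j = a + 1 := ⟨j - 1, by omega⟩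
              obtain ⟨b, hb⟩ : ∃ b, m - 1 - (a+1) = b + 1 := ⟨m - 1 - (a+1) - 1, by omega⟩
              rw [hb, show a+1-1 = a from by omega,
                show m-1-(a+1+1) = b from by omega,
                show m = a+b+3 from by omega]
              have h1 := cheb_cross a (b+1)
              rw [show a+(b+1)+2 = a+b+3 from by omega, show (b+1)+1 = b+2 from rfl] at h1
              have r := chebP_rec b
              linear_combination h1 - chebP (a+1) * r
            rw [hpoly, Polynomial.coe_add, Polynomial.coe_mul, Polynomial.coe_X,
              Polynomial.coe_add, map_add]
            congr 1
            refine coeff_X_mul_congr N (fun N' hN' => ?_)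
            rw [map_add, map_add]
            congr 1
            · exact IH N' hN' j (j+1) (by omega) (by omega)
            · exact IH N' hN' (j-1) j (by omega) (by omega)
          · -- j = m - 1
            have hj3 : j = m - 1 := by omega
            rw [if_neg hj2, if_pos (show 1 ≤ j from hj1), zero_add]
            have hpoly : chebP j * chebP (m-1-j) =
                chebP m + Polynomial.X * (chebP (j-1) * chebP (m-1-j)) := by
              obtain ⟨m'', rfl⟩ : ∃ m'', m = m'' + 2 := ⟨m - 2, by omega⟩
              rw [show m''+2-1-j = 0 from by omega, chebP_zero, mul_one, mul_one,
                show j = m''+1 from by omega, show m''+1-1 = m'' from by omega,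
                chebP_rec m'']
              ring
            rw [hpoly, Polynomial.coe_add, Polynomial.coe_mul, Polynomial.coe_X, map_add]
            congr 1
            refine coeff_X_mul_congr N (fun N' hN' => ?_)
            exact IH N' hN' (j-1) j (by omega) hjm
    | succ c ihc =>
        intro i j hij hjm hc
        rcases Nat.eq_zero_or_pos i with hi0 | hi1
        · subst hi0
          rw [S_off0 m j hm (by omega), ihc 1 j (by omega) hjm (by omega)]
          rw [chebP_one, chebP_zero]
        · rw [S_off m i j hi1 (by omega) hjm, add_mul, mul_assoc, map_add]
          have hpoly : chebP i * chebP (m-1-j) =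
              chebP (i+1) * chebP (m-1-j) +
                Polynomial.X * (chebP (i-1) * chebP (m-1-j)) := by
            obtain ⟨i', rfl⟩ : ∃ i', i = i' + 1 := ⟨i - 1, by omega⟩
            rw [show i'+1+1 = i'+2 from rfl, show i'+1-1 = i' from by omega, chebP_rec i']
            ring
          rw [hpoly, Polynomial.coe_add, Polynomial.coe_mul, Polynomial.coe_mul,
            Polynomial.coe_X, map_add]
          congr 1
          · have h := ihc (i+1) j (by omega) hjm (by omega)
            rw [Polynomial.coe_mul] at h
            exact h
          · refine coeff_X_mul_congr N (fun N' hN' => ?_)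
            exact IH N' hN' (i-1) j (by omega) hjm
  intro i j hij hjm
  exact inner (j - i) i j hij hjm (by omega)


lemma adT_succ_sum {M : Type*} [AddCommMonoid M] (n N : ℕ) (f : (Fin (n+1) → ℕ) → M) :
    ∑ u ∈ Finset.Nat.antidiagonalTuple (n+1) N, f u =
    ∑ p ∈ Finset.HasAntidiagonal.antidiagonal N, ∑ t ∈ Finset.Nat.antidiagonalTuple n p.2, f (Fin.cons p.1 t) := by
  rw [Finset.sum_sigma']
  refine Finset.sum_nbij' (fun u => ⟨(u 0, ∑ i : Fin n, u i.succ), Fin.tail u⟩)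
    (fun x => Fin.cons x.1.1 x.2) ?_ ?_ ?_ ?_ ?_
  · intro u hu
    rw [Finset.Nat.mem_antidiagonalTuple] at hu
    rw [Finset.mem_sigma]
    constructor
    · rw [Finset.HasAntidiagonal.mem_antidiagonal]
      rw [← hu, Fin.sum_univ_succ]
    · exact Finset.Nat.mem_antidiagonalTuple.mpr rfl
  · intro x hx
    rw [Finset.mem_sigma] at hx
    obtain ⟨h1, h2⟩ := hx
    rw [Finset.HasAntidiagonal.mem_antidiagonal] at h1
    rw [Finset.Nat.mem_antidiagonalTuple] at h2
    rw [Finset.Nat.mem_antidiagonalTuple, Fin.sum_univ_succ]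
    simp only [Fin.cons_zero, Fin.cons_succ]
    rw [h2, h1]
  · intro u _
    exact Fin.cons_self_tail u
  · rintro ⟨⟨p1, p2⟩, t⟩ hx
    rw [Finset.mem_sigma] at hx
    obtain ⟨-, h2⟩ := hx
    rw [Finset.Nat.mem_antidiagonalTuple] at h2
    simp [Fin.tail_cons, Fin.cons_succ, h2]
  · intro u _
    rw [Fin.cons_self_tail]

lemma coeff_prod_fin : ∀ (n N : ℕ) (φ : Fin n → PowerSeries ℚ),
    (PowerSeries.coeff (R := ℚ) N) (∏ ν, φ ν) =
    ∑ u ∈ Finset.Nat.antidiagonalTuple n N, ∏ ν, (PowerSeries.coeff (R := ℚ) (u ν)) (φ ν) := by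
  intro n
  induction n with
  | zero =>
      intro N φ
      cases N with
      | zero => simp
      | succ N => simp [PowerSeries.coeff_one]
  | succ n ih =>
      intro N φ
      rw [Fin.prod_univ_succ, PowerSeries.coeff_mul, adT_succ_sum]
      refine Finset.sum_congr rfl (fun p _ => ?_)
      rw [ih p.2 (fun i => φ i.succ), Finset.mul_sum]
      refine Finset.sum_congr rfl (fun t _ => ?_)
      rw [Fin.prod_univ_succ]
      simp only [Fin.cons_zero, Fin.cons_succ]


lemma dyckCount_eq (m a b u : ℕ) (hm : 1 ≤ m) (hab : a ≤ m - 1 - b) :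
    dyckCount m a b u = W m (m-1-b) a ((m-1-b) - a + 2*u) := by
  rw [dyckCount]
  have h1 := master m hm (2*(m-1-b+u)) a (m-1-b) 0 (by omega) (by omega)
  have h2 : Nat.card {st : Fin (2 * (m - 1 - b + u)) → Bool //
      heightAt st (2 * (m - 1 - b + u)) = 0 ∧
      (∀ i ≤ 2 * (m - 1 - b + u), 0 ≤ heightAt st i ∧ heightAt st i ≤ (m : ℤ) - 1) ∧
      (∀ j : Fin (2 * (m - 1 - b + u)), (j : ℕ) < a → st j = true) ∧
      (∀ j : Fin (2 * (m - 1 - b + u)),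
          2 * (m - 1 - b + u) - (m - 1 - b) ≤ (j : ℕ) → st j = false)} =
      Nat.card {st : Fin (2*(m-1-b+u)) → Bool //
        PathP m ((0:ℕ):ℤ) (2*(m-1-b+u)) a (m-1-b) st} := by
    apply Nat.card_congr
    apply Equiv.subtypeEquivRight
    intro st
    simp [PathP]
  rw [h2, h1]
  have he : 2*(m-1-b+u) - a - (m-1-b) = (m-1-b) - a + 2*u := by clear h1 h2; omega
  rw [he, Nat.zero_add]

end S8

open S8 in
/-- fix `m ≥ 2`, `d ≥ 0`, `r₁,…,r_d` with `1 ≤ rᵢ ≤ m-1`,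
`q ≥ d`, `0 ≤ ρ < m`, `N ≥ 0`.  The coefficient of `x^N` in
`p_{m-ρ-1}(x)·(∏ᵢ p_{rᵢ}(x))·p_m(x)^{-(q+1)} ∈ ℚ[[x]]` equals the number of
`(q+1)`-tuples `(P₀,…,P_q)` of Dyck paths such that for some `u₀+⋯+u_q = N`,
`P₀` is counted by `D_m(0, m-ρ-1; u₀)`, `Pᵢ` is counted by `D_m(rᵢ, 0; uᵢ)`
for `1 ≤ i ≤ d`, and `P_ν` is counted by `D_m(0,0;u_ν)` for `d+1 ≤ ν ≤ q`;
that is, it equals the corresponding sum of products of path counts. -/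
theorem statement8 (m d : ℕ) (hm : 2 ≤ m) (r : Fin d → ℕ)
    (hr1 : ∀ i, 1 ≤ r i) (hr2 : ∀ i, r i ≤ m - 1)
    (q : ℕ) (hq : d ≤ q) (ρ : ℕ) (hρ : ρ < m) (N : ℕ) :
    PowerSeries.coeff (R := ℚ) N
      ((chebP (m - ρ - 1) : PowerSeries ℚ) *
        ((∏ i, chebP (r i) : Polynomial ℚ) : PowerSeries ℚ) *
        ((chebP m : PowerSeries ℚ))⁻¹ ^ (q + 1))
    = ∑ u ∈ Finset.Nat.antidiagonalTuple (q + 1) N,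
        (dyckCount m 0 (m - ρ - 1) (u 0) : ℚ) *
          ∏ ν : Fin q,
            (if h : (ν : ℕ) < d then
                (dyckCount m (r ⟨ν, h⟩) 0 (u ν.succ) : ℚ)
              else
                (dyckCount m 0 0 (u ν.succ) : ℚ)) := by
  have hm1 : 1 ≤ m := by omega
  have hρm : ρ ≤ m - 1 := by omega
  -- dyckCount ↔ coefficients of Fser
  have hd0 : ∀ u0 : ℕ, (dyckCount m 0 (m - ρ - 1) u0 : ℚ) =
      (PowerSeries.coeff (R := ℚ) u0) (Fser m 0 ρ) := by
    intro u0
    rw [dyckCount_eq m 0 (m - ρ - 1) u0 hm1 (by omega)]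
    rw [Fser, PowerSeries.coeff_mk]
    norm_cast
    rw [show m - 1 - (m - ρ - 1) = ρ from by omega]
  have hd1 : ∀ (i : Fin d) (u : ℕ), (dyckCount m (r i) 0 u : ℚ) =
      (PowerSeries.coeff (R := ℚ) u) (Fser m (r i) (m-1)) := by
    intro i u
    rw [dyckCount_eq m (r i) 0 u hm1 (by have := hr2 i; omega)]
    rw [Fser, PowerSeries.coeff_mk]
    norm_cast
  have hd2 : ∀ u : ℕ, (dyckCount m 0 0 u : ℚ) =
      (PowerSeries.coeff (R := ℚ) u) (Fser m 0 (m-1)) := by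
    intro u
    rw [dyckCount_eq m 0 0 u hm1 (by omega)]
    rw [Fser, PowerSeries.coeff_mk]
    norm_cast
  set φ : Fin (q+1) → PowerSeries ℚ := Fin.cons (Fser m 0 ρ)
    (fun ν : Fin q => if h : (ν : ℕ) < d then Fser m (r ⟨ν, h⟩) (m-1) else Fser m 0 (m-1))
    with hφ
  -- RHS equals the coefficient of the product of the φ's
  have hRHS : (∑ u ∈ Finset.Nat.antidiagonalTuple (q + 1) N,
        (dyckCount m 0 (m - ρ - 1) (u 0) : ℚ) *
          ∏ ν : Fin q,
            (if h : (ν : ℕ) < d then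
                (dyckCount m (r ⟨ν, h⟩) 0 (u ν.succ) : ℚ)
              else
                (dyckCount m 0 0 (u ν.succ) : ℚ))) =
      (PowerSeries.coeff (R := ℚ) N) (∏ ν, φ ν) := by
    rw [coeff_prod_fin]
    refine Finset.sum_congr rfl (fun u _ => ?_)
    rw [Fin.prod_univ_succ]
    congr 1
    · rw [hφ, Fin.cons_zero]
      exact hd0 (u 0)
    · refine Finset.prod_congr rfl (fun ν _ => ?_)
      rw [hφ, Fin.cons_succ]
      by_cases h : (ν : ℕ) < d
      · rw [dif_pos h, dif_pos h]
        exact hd1 ⟨ν, h⟩ (u ν.succ)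
      · rw [dif_neg h, dif_neg h]
        exact hd2 (u ν.succ)
  rw [hRHS]
  -- the power series identity for Fser
  have hunit : (PowerSeries.constantCoeff (R := ℚ)) ((chebP m : Polynomial ℚ) : PowerSeries ℚ) ≠ 0 := by
    rw [Polynomial.constantCoeff_coe, chebP_coeff_zero]
    norm_num
  have hFser : ∀ i j : ℕ, i ≤ j → j ≤ m - 1 →
      Fser m i j = ((chebP i * chebP (m-1-j) : Polynomial ℚ) : PowerSeries ℚ) *
        ((chebP m : Polynomial ℚ) : PowerSeries ℚ)⁻¹ := by
    intro i j hij hjm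
    rw [PowerSeries.eq_mul_inv_iff_mul_eq hunit]
    exact PowerSeries.ext (fun n => key m hm n i j hij hjm)
  -- compute the product of the φ's
  have hφ0 : φ 0 = ((chebP (m - ρ - 1) : Polynomial ℚ) : PowerSeries ℚ) *
      ((chebP m : Polynomial ℚ) : PowerSeries ℚ)⁻¹ := by
    rw [hφ, Fin.cons_zero, hFser 0 ρ (by omega) hρm, chebP_zero, one_mul,
      show m - 1 - ρ = m - ρ - 1 from by omega]
  have hφs : ∀ ν : Fin q, φ ν.succ =
      (((if h : (ν : ℕ) < d then chebP (r ⟨ν, h⟩) else 1) : Polynomial ℚ) : PowerSeries ℚ) *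
      ((chebP m : Polynomial ℚ) : PowerSeries ℚ)⁻¹ := by
    intro ν
    rw [hφ, Fin.cons_succ]
    by_cases h : (ν : ℕ) < d
    · rw [dif_pos h, dif_pos h, hFser (r ⟨ν, h⟩) (m-1) (hr2 _) le_rfl,
        show m - 1 - (m-1) = 0 from by omega, chebP_zero, mul_one]
    · rw [dif_neg h, dif_neg h, hFser 0 (m-1) (by omega) le_rfl,
        show m - 1 - (m-1) = 0 from by omega, chebP_zero, one_mul, Polynomial.coe_one]
  have hnum : (∏ ν : Fin q, ((if h : (ν : ℕ) < d then chebP (r ⟨ν, h⟩) else 1) : Polynomial ℚ)) =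
      ∏ i : Fin d, chebP (r i) := by
    have hg : ∀ ν : Fin q, ((if h : (ν : ℕ) < d then chebP (r ⟨ν, h⟩) else 1) : Polynomial ℚ) =
        (fun n : ℕ => if h : n < d then chebP (r ⟨n, h⟩) else 1) (ν : ℕ) := fun ν => rfl
    rw [Finset.prod_congr rfl (fun ν _ => hg ν)]
    rw [Fin.prod_univ_eq_prod_range (fun n : ℕ => if h : n < d then chebP (r ⟨n, h⟩) else 1) q]
    rw [← Finset.prod_subset (Finset.range_subset_range.mpr hq)
      (fun x _ hx => dif_neg (by simp only [Finset.mem_range] at hx; omega))]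
    rw [← Fin.prod_univ_eq_prod_range (fun n : ℕ => if h : n < d then chebP (r ⟨n, h⟩) else 1) d]
    refine Finset.prod_congr rfl (fun i _ => ?_)
    rw [dif_pos i.2]
  have hprod : (∏ ν, φ ν) =
      ((chebP (m - ρ - 1) : Polynomial ℚ) : PowerSeries ℚ) *
      ((∏ i, chebP (r i) : Polynomial ℚ) : PowerSeries ℚ) *
      (((chebP m : Polynomial ℚ) : PowerSeries ℚ))⁻¹ ^ (q + 1) := by
    rw [Fin.prod_univ_succ, hφ0]
    rw [Finset.prod_congr rfl (fun ν _ => hφs ν)]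
    rw [Finset.prod_mul_distrib, Finset.prod_const, Finset.card_univ, Fintype.card_fin]
    have hcoe : (∏ ν : Fin q,
        (((if h : (ν : ℕ) < d then chebP (r ⟨ν, h⟩) else 1) : Polynomial ℚ) : PowerSeries ℚ)) =
        ((∏ ν : Fin q, ((if h : (ν : ℕ) < d then chebP (r ⟨ν, h⟩) else 1) : Polynomial ℚ) :
          Polynomial ℚ) : PowerSeries ℚ) := by
      induction (Finset.univ : Finset (Fin q)) using Finset.cons_induction with
      | empty => simp
      | cons a s ha ih => rw [Finset.prod_cons, Finset.prod_cons, Polynomial.coe_mul, ih]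
    rw [hcoe, hnum]
    ring
  rw [hprod]
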